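/- arXiv:2307.16720 — 5 statements merged into one kernel-verified Lean document; each statement's English description precedes it below -/
import Mathlib

section
/- For a finite sample of n continuous functions x_1,...,x_n on a compact interval I (with positive Lebesgue measure) that includes the function x itself (x = x_j for some j), and assuming that for every i ≠ j the set {t ∈ I : x_i(t) = x(t)} has Lebesgue measure zero, the modified hypograph index and modified epigraph index satisfy MHI_n(x) − MEI_n(x) = 1/n, where MEI_n(x) = 1 − (1/(n·λ(I))) Σ_{i=1}^n λ({t ∈ I : x_i(t) ≥ x(t)}) and MHI_n(x) = (1/(n·λ(I))) Σ_{i=1}^n λ({t ∈ I : x_i(t) ≤ x(t)}). -/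
open MeasureTheory Set

lemma meas_le_set {a b : ℝ} {f g : ℝ → ℝ} (hf : ContinuousOn f (Icc a b))
    (hg : ContinuousOn g (Icc a b)) :
    MeasurableSet {t ∈ Icc a b | f t ≤ g t} := by
  have : {t ∈ Icc a b | f t ≤ g t} = Icc a b ∩ (fun t => f t - g t) ⁻¹' Iic 0 := by
    ext t; simp [sub_nonpos]
  rw [this]
  exact ((hf.sub hg).preimage_isClosed_of_isClosed isClosed_Icc isClosed_Iic).measurableSet

/-- For a sample of n continuous functions on a compact interval `[a,b]`
containing the curve `x = x j`, with the equality sets of null measure,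
`MHI_n(x) - MEI_n(x) = 1/n`. -/
theorem mhi_sub_mei_eq_one_div
    (a b : ℝ) (hab : a < b) (n : ℕ) (hn : 0 < n)
    (x : Fin n → ℝ → ℝ)
    (hcont : ∀ i, ContinuousOn (x i) (Icc a b))
    (j : Fin n)
    (hnull : ∀ i, i ≠ j → volume {t ∈ Icc a b | x i t = x j t} = 0) :
    (∑ i, (volume {t ∈ Icc a b | x i t ≤ x j t}).toReal) / (n * (volume (Icc a b)).toReal)
      - (1 - (∑ i, (volume {t ∈ Icc a b | x j t ≤ x i t}).toReal)
          / (n * (volume (Icc a b)).toReal))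
    = 1 / n := by
  set V := (volume (Icc a b)).toReal with hV
  have hVval : V = b - a := by
    rw [hV, Real.volume_Icc, ENNReal.toReal_ofReal (by linarith)]
  have hVpos : 0 < V := by rw [hVval]; linarith
  have hfin : ∀ i, volume {t ∈ Icc a b | x i t ≤ x j t} ≠ ⊤ := by
    intro i
    exact ne_top_of_le_ne_top (by simp [Real.volume_Icc]) (measure_mono (fun t ht => ht.1))
  have hfin' : ∀ i, volume {t ∈ Icc a b | x j t ≤ x i t} ≠ ⊤ := by
    intro i
    exact ne_top_of_le_ne_top (by simp [Real.volume_Icc]) (measure_mono (fun t ht => ht.1))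
  -- key: for each i, toReal A_i + toReal B_i = V + (if i = j then V else 0)
  have key : ∀ i, (volume {t ∈ Icc a b | x i t ≤ x j t}).toReal
      + (volume {t ∈ Icc a b | x j t ≤ x i t}).toReal
      = V + (if i = j then V else 0) := by
    intro i
    by_cases hij : i = j
    · subst hij
      have hs : {t ∈ Icc a b | x i t ≤ x i t} = Icc a b := by ext t; simp
      rw [if_pos rfl, hs]
    · simp only [hij, if_false, add_zero]
      have hsum : volume {t ∈ Icc a b | x i t ≤ x j t}
          + volume {t ∈ Icc a b | x j t ≤ x i t} = volume (Icc a b) := by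
        have hunion : {t ∈ Icc a b | x i t ≤ x j t} ∪ {t ∈ Icc a b | x j t ≤ x i t}
            = Icc a b := by
          ext t
          constructor
          · rintro (⟨h, _⟩ | ⟨h, _⟩) <;> exact h
          · intro h
            rcases le_total (x i t) (x j t) with h' | h'
            · exact Or.inl ⟨h, h'⟩
            · exact Or.inr ⟨h, h'⟩
        have hinter : volume ({t ∈ Icc a b | x i t ≤ x j t}
            ∩ {t ∈ Icc a b | x j t ≤ x i t}) = 0 := by
          refine measure_mono_null ?_ (hnull i hij)
          rintro t ⟨⟨ht, h1⟩, ⟨_, h2⟩⟩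
          exact ⟨ht, le_antisymm h1 h2⟩
        have := measure_union_add_inter (μ := volume)
          {t ∈ Icc a b | x i t ≤ x j t} (meas_le_set (hcont j) (hcont i))
        rw [hunion, hinter, add_zero] at this
        exact this.symm
      have := congrArg ENNReal.toReal hsum
      rwa [ENNReal.toReal_add (hfin i) (hfin' i)] at this
  have hsumkey : (∑ i, (volume {t ∈ Icc a b | x i t ≤ x j t}).toReal)
      + (∑ i, (volume {t ∈ Icc a b | x j t ≤ x i t}).toReal) = (n + 1) * V := by
    rw [← Finset.sum_add_distrib]
    rw [Finset.sum_congr rfl (fun i _ => key i)]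
    rw [Finset.sum_add_distrib, Finset.sum_ite_eq' Finset.univ j, Finset.sum_const]
    simp; ring
  have hn' : (0 : ℝ) < n := by exact_mod_cast hn
  set S := ∑ i, (volume {t ∈ Icc a b | x i t ≤ x j t}).toReal with hS
  set T := ∑ i, (volume {t ∈ Icc a b | x j t ≤ x i t}).toReal with hT
  field_simp
  nlinarith [hsumkey]
end

section
/- For a sample of n bivariate continuous functions x_1,...,x_n : I → ℝ² containing the curve x (i.e., x = x_j for some j), and assuming that for every i ≠ j and every k ∈ {1,2} the set {t ∈ I : x_{ik}(t) = x_k(t)} has Lebesgue measure zero, the bivariate modified indexes satisfy MHI_n(x) + MEI_n(x) = MHI²_{n,1}(x) + MHI²_{n,2}(x) − 1/n, where MHI²_{n,k}(x) = (1/(nλ(I))) Σ_i λ({t : x_{ik}(t) ≤ x_k(t)}) is the univariate modified hypograph index of the k-th component. -/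
open MeasureTheory Set

/-- bivariate relation `MHI_n(x) + MEI_n(x) = MHI²_{n,1}(x) + MHI²_{n,2}(x) - 1/n`. -/
theorem bivariate_mhi_add_mei
    (a b : ℝ) (hab : a < b) (n : ℕ) (hn : 0 < n)
    (x : Fin n → ℝ → Fin 2 → ℝ)
    (hcont : ∀ i k, ContinuousOn (fun t => x i t k) (Icc a b))
    (j : Fin n)
    (hnull : ∀ i, i ≠ j → ∀ k : Fin 2, volume {t ∈ Icc a b | x i t k = x j t k} = 0) :
    (∑ i, (volume {t ∈ Icc a b | ∀ k : Fin 2, x i t k ≤ x j t k}).toReal)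
        / (n * (volume (Icc a b)).toReal)
      + (1 - (∑ i, (volume {t ∈ Icc a b | ∀ k : Fin 2, x j t k ≤ x i t k}).toReal)
          / (n * (volume (Icc a b)).toReal))
    = (∑ i, (volume {t ∈ Icc a b | x i t 0 ≤ x j t 0}).toReal)
        / (n * (volume (Icc a b)).toReal)
      + (∑ i, (volume {t ∈ Icc a b | x i t 1 ≤ x j t 1}).toReal)
        / (n * (volume (Icc a b)).toReal)
      - 1 / n := by
  have hL : (0:ℝ) < b - a := sub_pos.mpr hab
  have hvol : volume (Icc a b) = ENNReal.ofReal (b - a) := Real.volume_Icc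
  have hvolR : (volume (Icc a b)).toReal = b - a := by
    rw [hvol, ENNReal.toReal_ofReal hL.le]
  have hItop : volume (Icc a b) ≠ ⊤ := by rw [hvol]; exact ENNReal.ofReal_ne_top
  have hfin : ∀ s : Set ℝ, s ⊆ Icc a b → volume s ≠ ⊤ := fun s hs =>
    ((measure_mono hs).trans_lt (lt_top_iff_ne_top.mpr hItop)).ne
  have hmeas : ∀ (f g : ℝ → ℝ), ContinuousOn f (Icc a b) → ContinuousOn g (Icc a b) →
      MeasurableSet {t ∈ Icc a b | f t ≤ g t} := by
    intro f g hf hg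
    have h1 : {t ∈ Icc a b | f t ≤ g t}
        = Icc a b ∩ (fun t => (f t, g t)) ⁻¹' {p : ℝ × ℝ | p.1 ≤ p.2} := rfl
    rw [h1]
    exact ((hf.prodMk hg).preimage_isClosed_of_isClosed isClosed_Icc
      (isClosed_le continuous_fst continuous_snd)).measurableSet
  have key : ∀ i : Fin n,
      (volume {t ∈ Icc a b | ∀ k : Fin 2, x i t k ≤ x j t k}).toReal
        + (if i = j then (b - a) else 0) + (b - a)
      = (volume {t ∈ Icc a b | x i t 0 ≤ x j t 0}).toReal
        + (volume {t ∈ Icc a b | x i t 1 ≤ x j t 1}).toReal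
        + (volume {t ∈ Icc a b | ∀ k : Fin 2, x j t k ≤ x i t k}).toReal := by
    intro i
    by_cases hij : i = j
    · subst hij
      simp only [if_pos rfl]
      have h1 : {t ∈ Icc a b | ∀ k : Fin 2, x i t k ≤ x i t k} = Icc a b := by
        ext t; simp
      have h2 : {t ∈ Icc a b | x i t 0 ≤ x i t 0} = Icc a b := by ext t; simp
      have h3 : {t ∈ Icc a b | x i t 1 ≤ x i t 1} = Icc a b := by ext t; simp
      rw [h1, h2, h3, hvolR]; simp; try ring
    · simp only [if_neg hij, add_zero]
      set P : Set ℝ := {t ∈ Icc a b | x i t 0 ≤ x j t 0} with hP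
      set Q : Set ℝ := {t ∈ Icc a b | x i t 1 ≤ x j t 1} with hQ
      have hPm : MeasurableSet P := hmeas _ _ (hcont i 0) (hcont j 0)
      have hQm : MeasurableSet Q := hmeas _ _ (hcont i 1) (hcont j 1)
      have hPI : P ⊆ Icc a b := fun t ht => ht.1
      have hQI : Q ⊆ Icc a b := fun t ht => ht.1
      have hA : {t ∈ Icc a b | ∀ k : Fin 2, x i t k ≤ x j t k} = P ∩ Q := by
        ext t
        simp only [hP, hQ, mem_setOf_eq, mem_inter_iff, Fin.forall_fin_two]
        tauto
      -- the hypograph set equals (up to measure) the complement of P ∪ Q inside Icc a b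
      set N : Set ℝ := {t ∈ Icc a b | x i t 0 = x j t 0} ∪ {t ∈ Icc a b | x i t 1 = x j t 1}
        with hNdef
      have hN : volume N = 0 :=
        measure_union_null (hnull i hij 0) (hnull i hij 1)
      have hB : volume {t ∈ Icc a b | ∀ k : Fin 2, x j t k ≤ x i t k}
          = volume (Icc a b \ (P ∪ Q)) := by
        apply le_antisymm
        · have hsub : {t ∈ Icc a b | ∀ k : Fin 2, x j t k ≤ x i t k}
              ⊆ (Icc a b \ (P ∪ Q)) ∪ N := by
            intro t ht
            obtain ⟨htI, hall⟩ := ht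
            by_cases hPQ : t ∈ P ∪ Q
            · right
              rcases hPQ with h | h
              · exact Or.inl ⟨htI, le_antisymm h.2 (hall 0)⟩
              · exact Or.inr ⟨htI, le_antisymm h.2 (hall 1)⟩
            · exact Or.inl ⟨htI, hPQ⟩
          calc volume {t ∈ Icc a b | ∀ k : Fin 2, x j t k ≤ x i t k}
              ≤ volume ((Icc a b \ (P ∪ Q)) ∪ N) := measure_mono hsub
            _ ≤ volume (Icc a b \ (P ∪ Q)) + volume N := measure_union_le _ _
            _ = volume (Icc a b \ (P ∪ Q)) := by rw [hN, add_zero]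
        · apply measure_mono
          intro t ht
          obtain ⟨htI, htn⟩ := ht
          refine ⟨htI, ?_⟩
          rw [Fin.forall_fin_two]
          constructor
          · by_contra h
            exact htn (Or.inl ⟨htI, (not_le.mp h).le⟩)
          · by_contra h
            exact htn (Or.inr ⟨htI, (not_le.mp h).le⟩)
      -- ENNReal identity: μ(P∩Q) + μ(Icc a b) = μ P + μ Q + μ(Icc a b \ (P∪Q))
      have hPQI : P ∪ Q ⊆ Icc a b := union_subset hPI hQI
      have e1 : volume (P ∪ Q) + volume (P ∩ Q) = volume P + volume Q :=
        measure_union_add_inter P hQm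
      have e2 : volume (Icc a b ∩ (P ∪ Q)) + volume (Icc a b \ (P ∪ Q)) = volume (Icc a b) :=
        measure_inter_add_diff _ (hPm.union hQm)
      have hIS : Icc a b ∩ (P ∪ Q) = P ∪ Q := inter_eq_self_of_subset_right hPQI
      rw [hIS] at e2
      have main : volume (P ∩ Q) + volume (Icc a b)
          = volume P + volume Q + volume (Icc a b \ (P ∪ Q)) := by
        calc volume (P ∩ Q) + volume (Icc a b)
            = volume (P ∩ Q) + (volume (P ∪ Q) + volume (Icc a b \ (P ∪ Q))) := by rw [e2]
          _ = (volume (P ∪ Q) + volume (P ∩ Q)) + volume (Icc a b \ (P ∪ Q)) := by ring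
          _ = volume P + volume Q + volume (Icc a b \ (P ∪ Q)) := by rw [e1]
      have hPQfin : volume (P ∩ Q) ≠ ⊤ := hfin _ (fun t ht => ht.1.1)
      have hPfin : volume P ≠ ⊤ := hfin _ hPI
      have hQfin : volume Q ≠ ⊤ := hfin _ hQI
      have hDfin : volume (Icc a b \ (P ∪ Q)) ≠ ⊤ := hfin _ diff_subset
      have mainR : (volume (P ∩ Q)).toReal + (volume (Icc a b)).toReal
          = (volume P).toReal + (volume Q).toReal
            + (volume (Icc a b \ (P ∪ Q))).toReal := by
        rw [← ENNReal.toReal_add hPQfin hItop, ← ENNReal.toReal_add hPfin hQfin,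
          ← ENNReal.toReal_add (ENNReal.add_ne_top.mpr ⟨hPfin, hQfin⟩) hDfin, main]
      rw [hA, hB, hvolR] at *
      linarith [mainR]
  have hsum : (∑ i, (volume {t ∈ Icc a b | ∀ k : Fin 2, x i t k ≤ x j t k}).toReal)
        + (b - a) + n * (b - a)
      = (∑ i, (volume {t ∈ Icc a b | x i t 0 ≤ x j t 0}).toReal)
        + (∑ i, (volume {t ∈ Icc a b | x i t 1 ≤ x j t 1}).toReal)
        + (∑ i, (volume {t ∈ Icc a b | ∀ k : Fin 2, x j t k ≤ x i t k}).toReal) := by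
    have := Finset.sum_congr rfl (fun i (_ : i ∈ Finset.univ) => key i)
    simp [Finset.sum_add_distrib, Finset.sum_ite_eq', Finset.mul_sum, mul_comm] at this ⊢
    linarith
  have hn' : (n : ℝ) ≠ 0 := Nat.cast_ne_zero.mpr hn.ne'
  rw [hvolR]
  set SA := ∑ i, (volume {t ∈ Icc a b | ∀ k : Fin 2, x i t k ≤ x j t k}).toReal with hSA
  set SB := ∑ i, (volume {t ∈ Icc a b | ∀ k : Fin 2, x j t k ≤ x i t k}).toReal with hSB
  set S0 := ∑ i, (volume {t ∈ Icc a b | x i t 0 ≤ x j t 0}).toReal with hS0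
  set S1 := ∑ i, (volume {t ∈ Icc a b | x i t 1 ≤ x j t 1}).toReal with hS1
  have hkey : SA = S0 + S1 + SB - (b - a) - n * (b - a) := by linarith [hsum]
  rw [hkey]
  field_simp
  ring
end

section
/- The multivariate epigraph index is invariant under component-wise positive affine transformations: if T(x)(t) = A(t)x(t) + b(t) where A(t) is a diagonal p×p matrix with strictly positive continuous diagonal entries A_k(t) > 0 and b ∈ C(I, ℝ^p), and the whole sample is transformed by T, then EI_n(T(x); T(x_1),…,T(x_n)) = EI_n(x; x_1,…,x_n). -/
open MeasureTheory Set
open scoped Classical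

/-- the multivariate epigraph index is invariant under component-wise
positive affine transformations `T(x)_k(t) = A_k(t) x_k(t) + b_k(t)` with `A_k > 0`. -/
theorem ei_affine_invariant
    (a b : ℝ) (hab : a < b) (n p : ℕ) (hn : 0 < n)
    (x : ℝ → Fin p → ℝ) (xs : Fin n → ℝ → Fin p → ℝ)
    (hx : ∀ k, ContinuousOn (fun t => x t k) (Icc a b))
    (hxs : ∀ i k, ContinuousOn (fun t => xs i t k) (Icc a b))
    (A bf : Fin p → ℝ → ℝ)
    (hA : ∀ k, ContinuousOn (A k) (Icc a b))
    (hApos : ∀ k, ∀ t ∈ Icc a b, 0 < A k t)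
    (hbf : ∀ k, ContinuousOn (bf k) (Icc a b)) :
    1 - (1 / (n : ℝ)) * ∑ i,
        (if (∀ k : Fin p, ∀ t ∈ Icc a b,
            A k t * x t k + bf k t ≤ A k t * xs i t k + bf k t) then (1 : ℝ) else 0)
    = 1 - (1 / (n : ℝ)) * ∑ i,
        (if (∀ k : Fin p, ∀ t ∈ Icc a b, x t k ≤ xs i t k) then (1 : ℝ) else 0) := by
  congr 2
  apply Finset.sum_congr rfl
  intro i _
  congr 1
  apply propext
  constructor
  · intro h k t ht
    have := h k t ht
    have hA' := (hApos k t ht)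
    nlinarith
  · intro h k t ht
    have := h k t ht
    have hA' := (hApos k t ht)
    nlinarith
end

section
/- The multivariate hypograph index is invariant under component-wise positive affine transformations: if T(x)(t) = A(t)x(t) + b(t) with A(t) diagonal having strictly positive continuous diagonal entries and b continuous, and the whole sample is transformed by T, then HI_n(T(x); T(x_1),…,T(x_n)) = HI_n(x; x_1,…,x_n). -/
open MeasureTheory Set
open scoped Classical

/-- the multivariate hypograph index is invariant under component-wise
positive affine transformations. -/
theorem hi_affine_invariant
    (a b : ℝ) (hab : a < b) (n p : ℕ) (hn : 0 < n)
    (x : ℝ → Fin p → ℝ) (xs : Fin n → ℝ → Fin p → ℝ)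
    (hx : ∀ k, ContinuousOn (fun t => x t k) (Icc a b))
    (hxs : ∀ i k, ContinuousOn (fun t => xs i t k) (Icc a b))
    (A bf : Fin p → ℝ → ℝ)
    (hA : ∀ k, ContinuousOn (A k) (Icc a b))
    (hApos : ∀ k, ∀ t ∈ Icc a b, 0 < A k t)
    (hbf : ∀ k, ContinuousOn (bf k) (Icc a b)) :
    (1 / (n : ℝ)) * ∑ i,
        (if (∀ k : Fin p, ∀ t ∈ Icc a b,
            A k t * xs i t k + bf k t ≤ A k t * x t k + bf k t) then (1 : ℝ) else 0)
    = (1 / (n : ℝ)) * ∑ i,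
        (if (∀ k : Fin p, ∀ t ∈ Icc a b, xs i t k ≤ x t k) then (1 : ℝ) else 0) := by
  congr 1
  apply Finset.sum_congr rfl
  intro i _
  congr 1
  apply propext
  constructor <;> intro h k t ht
  · have := h k t ht
    have hA' := hApos k t ht
    nlinarith [this]
  · have hA' := hApos k t ht
    have := h k t ht
    nlinarith
end

section
/- The multivariate modified epigraph index MEI_n is invariant under component-wise positive affine transformations: if T(x)_k(t) = A_k(t)x_k(t) + b_k(t) with A_k : I → ℝ continuous, A_k(t) > 0 for all t ∈ I, and b_k continuous, and the entire sample is transformed by T, then MEI_n(T(x); T(x_1),…,T(x_n)) = MEI_n(x; x_1,…,x_n), and likewise for MHI_n. -/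
open MeasureTheory Set

/-- `MEI_n` and `MHI_n` are invariant under component-wise positive affine
transformations `T(x)_k(t) = A_k(t) x_k(t) + b_k(t)` with `A_k > 0` continuous. -/
theorem mei_mhi_affine_invariant
    (a b : ℝ) (hab : a < b) (n p : ℕ) (hn : 0 < n)
    (x : ℝ → Fin p → ℝ) (xs : Fin n → ℝ → Fin p → ℝ)
    (A bf : Fin p → ℝ → ℝ)
    (hA : ∀ k, ContinuousOn (A k) (Icc a b))
    (hApos : ∀ k, ∀ t ∈ Icc a b, 0 < A k t)
    (hbf : ∀ k, ContinuousOn (bf k) (Icc a b)) :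
    (1 - (∑ i, (volume {t ∈ Icc a b | ∀ k : Fin p,
          A k t * x t k + bf k t ≤ A k t * xs i t k + bf k t}).toReal)
        / (n * (volume (Icc a b)).toReal)
      = 1 - (∑ i, (volume {t ∈ Icc a b | ∀ k : Fin p, x t k ≤ xs i t k}).toReal)
        / (n * (volume (Icc a b)).toReal))
    ∧
    ((∑ i, (volume {t ∈ Icc a b | ∀ k : Fin p,
          A k t * xs i t k + bf k t ≤ A k t * x t k + bf k t}).toReal)
        / (n * (volume (Icc a b)).toReal)
      = (∑ i, (volume {t ∈ Icc a b | ∀ k : Fin p, xs i t k ≤ x t k}).toReal)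
        / (n * (volume (Icc a b)).toReal)) := by
  have key : ∀ (u v : ℝ → Fin p → ℝ),
      {t ∈ Icc a b | ∀ k : Fin p, A k t * u t k + bf k t ≤ A k t * v t k + bf k t}
        = {t ∈ Icc a b | ∀ k : Fin p, u t k ≤ v t k} := by
    intro u v
    ext t
    simp only [mem_setOf_eq, mem_sep_iff]
    refine and_congr_right fun ht => forall_congr' fun k => ?_
    rw [add_le_add_iff_right, mul_le_mul_iff_right₀ (hApos k t ht)]
  constructor
  · congr 1
    refine congrArg (· / _) (Finset.sum_congr rfl fun i _ => ?_)
    rw [key]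
  · refine congrArg (· / _) (Finset.sum_congr rfl fun i _ => ?_)
    rw [key]
end
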